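/- Let {P₀,…,P_m} be a symmetric Clifford system on ℝ^{2l}, and define f: ℝ^{2l} → ℝ by f(x) = |x|⁴ − 2·Σ_{i=0}^m ⟨P_ix, x⟩². If P, Q ∈ Σ anticommute (PQ + QP = 0) and W = PQ, then f is invariant under the one-parameter flow generated by W, i.e. f(exp(tW)x) = f(x) for all t ∈ ℝ and x ∈ ℝ^{2l}. -/

import Mathlib

open Matrix

/-- A symmetric Clifford system on ℝ^{2l}: real symmetric matrices with
P_i P_j + P_j P_i = 2 δ_{ij} I. -/
def IsCliffordSystem (l m : ℕ) (P : Fin (m + 1) → Matrix (Fin (2 * l)) (Fin (2 * l)) ℝ) : Prop :=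
  (∀ i, (P i)ᵀ = P i) ∧
  (∀ i j, P i * P j + P j * P i =
    if i = j then (2 : ℝ) • (1 : Matrix (Fin (2 * l)) (Fin (2 * l)) ℝ) else 0)

/-- The Cartan–Münzner polynomial of the OT-FKM construction:
f(x) = |x|⁴ − 2 ∑ ⟨Pᵢx, x⟩². -/
noncomputable def otfkm (l m : ℕ) (P : Fin (m + 1) → Matrix (Fin (2 * l)) (Fin (2 * l)) ℝ)
    (x : Fin (2 * l) → ℝ) : ℝ :=
  (x ⬝ᵥ x) ^ 2 - 2 * ∑ i, ((P i).mulVec x ⬝ᵥ x) ^ 2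

private lemma otfkm_sum_mulVec {ι : Type*} [Fintype ι] {n : ℕ}
    (F : ι → Matrix (Fin n) (Fin n) ℝ) (x : Fin n → ℝ) :
    (∑ i, F i).mulVec x = ∑ i, (F i).mulVec x := by
  ext j
  simp only [Matrix.mulVec, dotProduct, Finset.sum_apply, Matrix.sum_apply, Finset.sum_mul]
  exact Finset.sum_comm


private lemma otfkm_sum_dot {ι : Type*} [Fintype ι] {n : ℕ}
    (v : ι → Fin n → ℝ) (w : Fin n → ℝ) :
    (∑ i, v i) ⬝ᵥ w = ∑ i, v i ⬝ᵥ w := by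
  simp only [dotProduct, Finset.sum_apply, Finset.sum_mul]
  exact Finset.sum_comm

private lemma otfkm_dot_conj {n : ℕ} (A E : Matrix (Fin n) (Fin n) ℝ) (x : Fin n → ℝ) :
    A.mulVec (E.mulVec x) ⬝ᵥ E.mulVec x = (Eᵀ * A * E).mulVec x ⬝ᵥ x := by
  rw [Matrix.mulVec_mulVec, Matrix.dotProduct_mulVec, ← Matrix.mulVec_transpose,
    Matrix.mulVec_mulVec, ← Matrix.mul_assoc]

private lemma otfkm_conj_expand {R : Type*} [Ring R] [Module ℝ R]
    [SMulCommClass ℝ R R] [IsScalarTower ℝ R R] (c s : ℝ) (X W : R) :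
    (c • 1 - s • W) * X * (c • 1 + s • W)
      = (c * c) • X + (c * s) • (X * W) - (c * s) • (W * X) - (s * s) • (W * X * W) := by
  simp only [sub_mul, add_mul, mul_add, mul_sub, smul_mul_assoc, mul_smul_comm,
    one_mul, mul_one, smul_smul, mul_assoc]
  match_scalars <;> ring

open NormedSpace in
private lemma otfkm_exp_formula {n : ℕ} (W : Matrix (Fin n) (Fin n) ℝ)
    (hW : W * W = -1) (t : ℝ) :
    exp (t • W) = Real.cos t • 1 + Real.sin t • W := by
  letI : SeminormedRing (Matrix (Fin n) (Fin n) ℝ) := Matrix.linftyOpSemiNormedRing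
  letI : NormedRing (Matrix (Fin n) (Fin n) ℝ) := Matrix.linftyOpNormedRing
  letI : NormedAlgebra ℝ (Matrix (Fin n) (Fin n) ℝ) := Matrix.linftyOpNormedAlgebra
  let φ : ℂ →ₐ[ℝ] Matrix (Fin n) (Fin n) ℝ := Complex.liftAux W hW
  have hφI : φ Complex.I = W := Complex.liftAux_apply_I W hW
  have hc : Continuous φ := φ.toLinearMap.continuous_of_finiteDimensional
  have h1 : t • W = φ (t • Complex.I) := by rw [_root_.map_smul, hφI]
  rw [h1]
  erw [← map_exp φ hc]
  have h2 : exp (t • Complex.I) = Complex.exp (t * Complex.I) := by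
    rw [Complex.exp_eq_exp_ℂ]
    norm_num [smul_eq_mul]
  rw [h2, Complex.exp_mul_I, ← Complex.ofReal_cos, ← Complex.ofReal_sin]
  have h3 : (Real.cos t : ℂ) + (Real.sin t : ℂ) * Complex.I
      = Real.cos t • (1:ℂ) + Real.sin t • Complex.I := by
    simp [smul_eq_mul]
  rw [h3, map_add, _root_.map_smul, _root_.map_smul, _root_.map_one, hφI]

open NormedSpace in
/-- If P, Q in the Clifford sphere anticommute and W = PQ, then the OT-FKM polynomial is
invariant under the one-parameter flow generated by W: f(exp(tW)x) = f(x). -/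
theorem otfkm_invariant_under_flow (l m : ℕ)
    (Pfam : Fin (m + 1) → Matrix (Fin (2 * l)) (Fin (2 * l)) ℝ)
    (hP : IsCliffordSystem l m Pfam)
    (a b : Fin (m + 1) → ℝ) (ha : ∑ i, a i ^ 2 = 1) (hb : ∑ i, b i ^ 2 = 1)
    (P Q : Matrix (Fin (2 * l)) (Fin (2 * l)) ℝ)
    (hPdef : P = ∑ i, a i • Pfam i) (hQdef : Q = ∑ i, b i • Pfam i)
    (hanti : P * Q + Q * P = 0) :
    ∀ (t : ℝ) (x : Fin (2 * l) → ℝ),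
      otfkm l m Pfam ((exp (t • (P * Q))).mulVec x) = otfkm l m Pfam x := by
  intro t x
  obtain rfl | hl := Nat.eq_zero_or_pos l
  · simp [otfkm, dotProduct]
  -- basic Clifford consequences
  have hPiP : ∀ i, Pfam i * P + P * Pfam i
      = (2 * a i) • (1 : Matrix (Fin (2 * l)) (Fin (2 * l)) ℝ) := by
    intro i
    rw [hPdef, Finset.mul_sum, Finset.sum_mul, ← Finset.sum_add_distrib]
    have h : ∀ j ∈ Finset.univ, Pfam i * (a j • Pfam j) + a j • Pfam j * Pfam i
        = if i = j then (2 * a j) • (1 : Matrix (Fin (2 * l)) (Fin (2 * l)) ℝ) else 0 := by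
      intro j _
      rw [mul_smul_comm, smul_mul_assoc, ← smul_add, hP.2 i j]
      split <;> simp [smul_smul, mul_comm]
    rw [Finset.sum_congr rfl h, Finset.sum_ite_eq]
    simp
  have hPiQ : ∀ i, Pfam i * Q + Q * Pfam i
      = (2 * b i) • (1 : Matrix (Fin (2 * l)) (Fin (2 * l)) ℝ) := by
    intro i
    rw [hQdef, Finset.mul_sum, Finset.sum_mul, ← Finset.sum_add_distrib]
    have h : ∀ j ∈ Finset.univ, Pfam i * (b j • Pfam j) + b j • Pfam j * Pfam i
        = if i = j then (2 * b j) • (1 : Matrix (Fin (2 * l)) (Fin (2 * l)) ℝ) else 0 := by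
      intro j _
      rw [mul_smul_comm, smul_mul_assoc, ← smul_add, hP.2 i j]
      split <;> simp [smul_smul, mul_comm]
    rw [Finset.sum_congr rfl h, Finset.sum_ite_eq]
    simp
  have hP2 : P * P = (1 : Matrix (Fin (2 * l)) (Fin (2 * l)) ℝ) := by
    have h : P * P + P * P = (2 : ℝ) • (1 : Matrix (Fin (2 * l)) (Fin (2 * l)) ℝ) := by
      calc P * P + P * P
          = ∑ i, a i • (Pfam i * P) + ∑ i, a i • (P * Pfam i) := by
            nth_rewrite 1 [hPdef]; nth_rewrite 3 [hPdef]
            rw [Finset.sum_mul, Finset.mul_sum]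
            simp [smul_mul_assoc, mul_smul_comm]
        _ = ∑ i, a i • (Pfam i * P + P * Pfam i) := by
            rw [← Finset.sum_add_distrib]; simp [smul_add]
        _ = ∑ i, a i • ((2 * a i) • (1 : Matrix (Fin (2 * l)) (Fin (2 * l)) ℝ)) :=
            Finset.sum_congr rfl fun i _ => by rw [hPiP i]
        _ = (∑ i, 2 * a i ^ 2) • (1 : Matrix (Fin (2 * l)) (Fin (2 * l)) ℝ) := by
            rw [Finset.sum_smul]
            exact Finset.sum_congr rfl fun i _ => by rw [smul_smul]; ring_nf
        _ = (2 : ℝ) • (1 : Matrix (Fin (2 * l)) (Fin (2 * l)) ℝ) := by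
            rw [← Finset.mul_sum, ha, mul_one]
    rw [two_smul] at h
    have h2 : (2 : ℝ) • (P * P) = (2 : ℝ) • (1 : Matrix (Fin (2 * l)) (Fin (2 * l)) ℝ) := by
      rw [two_smul, two_smul]; exact h
    exact smul_right_injective _ two_ne_zero h2
  have hQ2 : Q * Q = (1 : Matrix (Fin (2 * l)) (Fin (2 * l)) ℝ) := by
    have h : Q * Q + Q * Q = (2 : ℝ) • (1 : Matrix (Fin (2 * l)) (Fin (2 * l)) ℝ) := by
      calc Q * Q + Q * Q
          = ∑ i, b i • (Pfam i * Q) + ∑ i, b i • (Q * Pfam i) := by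
            nth_rewrite 1 [hQdef]; nth_rewrite 3 [hQdef]
            rw [Finset.sum_mul, Finset.mul_sum]
            simp [smul_mul_assoc, mul_smul_comm]
        _ = ∑ i, b i • (Pfam i * Q + Q * Pfam i) := by
            rw [← Finset.sum_add_distrib]; simp [smul_add]
        _ = ∑ i, b i • ((2 * b i) • (1 : Matrix (Fin (2 * l)) (Fin (2 * l)) ℝ)) :=
            Finset.sum_congr rfl fun i _ => by rw [hPiQ i]
        _ = (∑ i, 2 * b i ^ 2) • (1 : Matrix (Fin (2 * l)) (Fin (2 * l)) ℝ) := by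
            rw [Finset.sum_smul]
            exact Finset.sum_congr rfl fun i _ => by rw [smul_smul]; ring_nf
        _ = (2 : ℝ) • (1 : Matrix (Fin (2 * l)) (Fin (2 * l)) ℝ) := by
            rw [← Finset.mul_sum, hb, mul_one]
    rw [two_smul] at h
    have h2 : (2 : ℝ) • (Q * Q) = (2 : ℝ) • (1 : Matrix (Fin (2 * l)) (Fin (2 * l)) ℝ) := by
      rw [two_smul, two_smul]; exact h
    exact smul_right_injective _ two_ne_zero h2
  have hab : ∑ i, a i * b i = 0 := by
    have h : P * Q + Q * P
        = (2 * ∑ i, a i * b i) • (1 : Matrix (Fin (2 * l)) (Fin (2 * l)) ℝ) := by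
      calc P * Q + Q * P
          = ∑ i, a i • (Pfam i * Q) + ∑ i, a i • (Q * Pfam i) := by
            nth_rewrite 1 [hPdef]; nth_rewrite 1 [hPdef]
            rw [Finset.sum_mul, Finset.mul_sum]
            simp [smul_mul_assoc, mul_smul_comm]
        _ = ∑ i, a i • (Pfam i * Q + Q * Pfam i) := by
            rw [← Finset.sum_add_distrib]; simp [smul_add]
        _ = ∑ i, a i • ((2 * b i) • (1 : Matrix (Fin (2 * l)) (Fin (2 * l)) ℝ)) :=
            Finset.sum_congr rfl fun i _ => by rw [hPiQ i]
        _ = (∑ i, a i * (2 * b i)) • (1 : Matrix (Fin (2 * l)) (Fin (2 * l)) ℝ) := by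
            rw [Finset.sum_smul]
            exact Finset.sum_congr rfl fun i _ => by rw [smul_smul]
        _ = (2 * ∑ i, a i * b i) • (1 : Matrix (Fin (2 * l)) (Fin (2 * l)) ℝ) := by
            rw [Finset.mul_sum]
            congr 1
            exact Finset.sum_congr rfl fun i _ => by ring
    rw [hanti] at h
    have i0 : Fin (2 * l) := ⟨0, by omega⟩
    have h0 := congrFun (congrFun h i0) i0
    simp only [Matrix.smul_apply, Matrix.one_apply_eq, Matrix.zero_apply, smul_eq_mul,
      mul_one] at h0
    linarith
  have hQP : Q * P = -(P * Q) := eq_neg_of_add_eq_zero_left (by rw [add_comm]; exact hanti)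
  have hWQ : P * Q * Q = P := by rw [Matrix.mul_assoc, hQ2, Matrix.mul_one]
  have hWP : P * Q * P = -Q := by
    rw [Matrix.mul_assoc, hQP, mul_neg, ← Matrix.mul_assoc, hP2, Matrix.one_mul]
  have hW2 : P * Q * (P * Q) = -1 := by
    calc P * Q * (P * Q) = P * (Q * P) * Q := by noncomm_ring
      _ = -(P * (P * Q) * Q) := by rw [hQP]; noncomm_ring
      _ = -(P * P * (Q * Q)) := by noncomm_ring
      _ = -1 := by rw [hP2, hQ2, Matrix.one_mul]
  -- commutation relations
  have hPiW : ∀ i, Pfam i * (P * Q) = (2 * a i) • Q - (2 * b i) • P + P * Q * Pfam i := by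
    intro i
    have h1 : Pfam i * P = (2 * a i) • (1 : Matrix (Fin (2 * l)) (Fin (2 * l)) ℝ) - P * Pfam i :=
      eq_sub_of_add_eq (hPiP i)
    have h2 : Pfam i * Q = (2 * b i) • (1 : Matrix (Fin (2 * l)) (Fin (2 * l)) ℝ) - Q * Pfam i :=
      eq_sub_of_add_eq (hPiQ i)
    calc Pfam i * (P * Q) = Pfam i * P * Q := by rw [Matrix.mul_assoc]
      _ = ((2 * a i) • (1 : Matrix (Fin (2 * l)) (Fin (2 * l)) ℝ) - P * Pfam i) * Q := by
          rw [h1]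
      _ = (2 * a i) • Q - P * (Pfam i * Q) := by
          rw [sub_mul, smul_mul_assoc, Matrix.one_mul, Matrix.mul_assoc]
      _ = (2 * a i) • Q - P * ((2 * b i) • (1 : Matrix (Fin (2 * l)) (Fin (2 * l)) ℝ)
            - Q * Pfam i) := by rw [h2]
      _ = (2 * a i) • Q - (2 * b i) • P + P * Q * Pfam i := by
          rw [mul_sub, mul_smul_comm, Matrix.mul_one, ← Matrix.mul_assoc]
          abel
  have hWPiW : ∀ i, P * Q * Pfam i * (P * Q) = (2 * a i) • P + (2 * b i) • Q - Pfam i := by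
    intro i
    calc P * Q * Pfam i * (P * Q) = P * Q * (Pfam i * (P * Q)) := by rw [Matrix.mul_assoc]
      _ = (2 * a i) • (P * Q * Q) - (2 * b i) • (P * Q * P) + P * Q * (P * Q) * Pfam i := by
          rw [hPiW i, mul_add, mul_sub, mul_smul_comm, mul_smul_comm, ← Matrix.mul_assoc]
      _ = (2 * a i) • P + (2 * b i) • Q - Pfam i := by
          rw [hWQ, hWP, hW2, smul_neg]
          simp only [neg_one_mul, Matrix.neg_mul, Matrix.one_mul]
          abel
  -- symmetry
  have hPsym : Pᵀ = P := by
    rw [hPdef, Matrix.transpose_sum]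
    exact Finset.sum_congr rfl fun i _ => by rw [Matrix.transpose_smul, hP.1 i]
  have hQsym : Qᵀ = Q := by
    rw [hQdef, Matrix.transpose_sum]
    exact Finset.sum_congr rfl fun i _ => by rw [Matrix.transpose_smul, hP.1 i]
  have hWt : (P * Q)ᵀ = -(P * Q) := by
    rw [Matrix.transpose_mul, hPsym, hQsym, hQP]
  -- the exponential
  set c := Real.cos t with hcdef
  set s := Real.sin t with hsdef
  have hcs : c ^ 2 + s ^ 2 = 1 := Real.cos_sq_add_sin_sq t
  have he : exp (t • (P * Q)) = c • 1 + s • (P * Q) := otfkm_exp_formula (P * Q) hW2 t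
  have het : (c • (1 : Matrix (Fin (2 * l)) (Fin (2 * l)) ℝ) + s • (P * Q))ᵀ
      = c • 1 - s • (P * Q) := by
    rw [Matrix.transpose_add, Matrix.transpose_smul, Matrix.transpose_smul,
      Matrix.transpose_one, hWt, smul_neg, sub_eq_add_neg]
  -- conjugation identities
  have hconj : ∀ i, (c • (1 : Matrix (Fin (2 * l)) (Fin (2 * l)) ℝ) - s • (P * Q)) * Pfam i
        * (c • 1 + s • (P * Q))
      = (c ^ 2 + s ^ 2) • Pfam i + (2 * (c * s * a i - s ^ 2 * b i)) • Q
        + (-(2 * (s ^ 2 * a i + c * s * b i))) • P := by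
    intro i
    rw [otfkm_conj_expand, hPiW i, hWPiW i]
    match_scalars <;> ring
  have hete : (c • (1 : Matrix (Fin (2 * l)) (Fin (2 * l)) ℝ) - s • (P * Q))
      * (c • 1 + s • (P * Q)) = 1 := by
    have h := otfkm_conj_expand c s (1 : Matrix (Fin (2 * l)) (Fin (2 * l)) ℝ) (P * Q)
    rw [Matrix.mul_one] at h
    rw [h, Matrix.one_mul, Matrix.mul_one, hW2]
    match_scalars
    · linear_combination hcs
    · ring
  -- scalar quantities
  set u : Fin (m + 1) → ℝ := fun i => (Pfam i).mulVec x ⬝ᵥ x with hu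
  have hpsum : P.mulVec x ⬝ᵥ x = ∑ j, a j * u j := by
    rw [hPdef, otfkm_sum_mulVec, otfkm_sum_dot]
    exact Finset.sum_congr rfl fun j _ => by
      rw [Matrix.smul_mulVec, smul_dotProduct, smul_eq_mul]
  have hqsum : Q.mulVec x ⬝ᵥ x = ∑ j, b j * u j := by
    rw [hQdef, otfkm_sum_mulVec, otfkm_sum_dot]
    exact Finset.sum_congr rfl fun j _ => by
      rw [Matrix.smul_mulVec, smul_dotProduct, smul_eq_mul]
  set p : ℝ := P.mulVec x ⬝ᵥ x with hp
  set q : ℝ := Q.mulVec x ⬝ᵥ x with hq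
  -- main computation
  rw [he]
  unfold otfkm
  have hnorm : (c • (1 : Matrix (Fin (2 * l)) (Fin (2 * l)) ℝ) + s • (P * Q)).mulVec x
      ⬝ᵥ (c • 1 + s • (P * Q)).mulVec x = x ⬝ᵥ x := by
    have h := otfkm_dot_conj (1 : Matrix (Fin (2 * l)) (Fin (2 * l)) ℝ)
      (c • 1 + s • (P * Q)) x
    rw [Matrix.one_mulVec] at h
    rw [h, Matrix.mul_one, het, hete, Matrix.one_mulVec]
  have hterm : ∀ i, (Pfam i).mulVec ((c • (1 : Matrix (Fin (2 * l)) (Fin (2 * l)) ℝ)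
        + s • (P * Q)).mulVec x) ⬝ᵥ (c • 1 + s • (P * Q)).mulVec x
      = u i + a i * (2 * (c * s * q - s ^ 2 * p)) + b i * (-(2 * (c * s * p + s ^ 2 * q))) := by
    intro i
    rw [otfkm_dot_conj, het, hconj i]
    rw [Matrix.add_mulVec, Matrix.add_mulVec, add_dotProduct, add_dotProduct,
      Matrix.smul_mulVec, Matrix.smul_mulVec, Matrix.smul_mulVec,
      smul_dotProduct, smul_dotProduct, smul_dotProduct]
    simp only [smul_eq_mul, ← hu, ← hp, ← hq]
    linear_combination ((Pfam i).mulVec x ⬝ᵥ x) * hcs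
  rw [hnorm]
  congr 1
  congr 1
  rw [Finset.sum_congr rfl fun i _ => by rw [hterm i]]
  set A : ℝ := 2 * (c * s * q - s ^ 2 * p) with hA
  set B : ℝ := -(2 * (c * s * p + s ^ 2 * q)) with hB
  have hexpand : ∀ i ∈ Finset.univ, (u i + a i * A + b i * B) ^ 2
      = u i ^ 2 + (2 * A) * (a i * u i) + (2 * B) * (b i * u i)
        + A ^ 2 * a i ^ 2 + B ^ 2 * b i ^ 2 + (2 * A * B) * (a i * b i) := by
    intro i _
    ring
  rw [Finset.sum_congr rfl hexpand]
  simp only [Finset.sum_add_distrib, ← Finset.mul_sum]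
  rw [ha, hb, hab, ← hpsum, ← hqsum]
  rw [hA, hB]
  linear_combination (4 * s ^ 2 * (p ^ 2 + q ^ 2)) * hcs
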